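/- Let M be an algebraically closed field of characteristic 0 extending ℂ, a ∈ M transcendental over ℂ, and suppose the Galois group of Z^N+Z^{N-1}+a over ℂ(a) is S_N, where N = 2^{n-1} and Θ(a) is the root set. Let X, Y be the odd- and even-cardinality subsets of {1,…,n} with membership predicates Xᵢ, Yᵢ. If φ: X → Θ(a) and ψ: Y → Θ(a) are bijections with Σ_{α∈Xᵢ} φ(α) = Σ_{β∈Yᵢ} ψ(β) for all i = 1,…,n, then a contradiction follows. -/

import Mathlib

open Polynomial IntermediateField

set_option maxHeartbeats 2000000 in
set_option synthInstance.maxHeartbeats 800000 in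
open scoped Classical in
theorem stmt15 (M : Type*) [Field M] [IsAlgClosed M] [Algebra ℂ M]
    (n : ℕ) (hn : 1 < n) (N : ℕ) (hNdef : N = 2 ^ (n - 1))
    (a : M) (ha : Transcendental ℂ a)
    (hGal : Nonempty
      (((X ^ N + X ^ (N - 1) + C (AdjoinSimple.gen ℂ a) : Polynomial ℂ⟮a⟯)).Gal ≃*
        Equiv.Perm (Fin N)))
    (Θ : Set M) (hΘ : Θ = {z : M | z ^ N + z ^ (N - 1) + a = 0})
    (φ ψ : Finset (Fin n) → M)
    (hφ : Set.BijOn φ {α | Odd α.card} Θ)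
    (hψ : Set.BijOn ψ {β | Even β.card} Θ)
    (hsum : ∀ i : Fin n,
      (∑ α ∈ Finset.univ.filter (fun α : Finset (Fin n) => Odd α.card ∧ i ∈ α), φ α) =
      (∑ β ∈ Finset.univ.filter (fun β : Finset (Fin n) => Even β.card ∧ i ∈ β), ψ β)) :
    False := by
  have hN2 : 2 ≤ N := by
    subst hNdef
    calc 2 = 2 ^ 1 := rfl
    _ ≤ 2 ^ (n - 1) := Nat.pow_le_pow_right (by norm_num) (by omega)
  haveI : CharZero M := charZero_of_injective_algebraMap (algebraMap ℂ M).injective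
  set p : (ℂ⟮a⟯ : IntermediateField ℂ M)[X] := X ^ N + X ^ (N - 1) + C (AdjoinSimple.gen ℂ a) with hp
  haveI : CharZero (↥ℂ⟮a⟯) :=
    charZero_of_injective_algebraMap (algebraMap ℂ ℂ⟮a⟯).injective
  have hdeg_small : ((X : (ℂ⟮a⟯ : IntermediateField ℂ M)[X]) ^ (N - 1) + C (AdjoinSimple.gen ℂ a)).degree < N := by
    apply lt_of_le_of_lt (degree_add_le _ _)
    apply max_lt
    · rw [degree_X_pow]
      exact_mod_cast Nat.cast_lt.mpr (by omega : N - 1 < N)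
    · exact lt_of_le_of_lt degree_C_le (by exact_mod_cast Nat.cast_lt.mpr (by omega : 0 < N))
  have hmonic : p.Monic := by
    have := monic_X_pow_add hdeg_small
    simpa [hp, add_assoc] using this
  have hdegp : p.natDegree = N := by
    have h : p.degree = N := by
      rw [hp, add_assoc, degree_add_eq_left_of_degree_lt (by rwa [degree_X_pow]), degree_X_pow]
    exact natDegree_eq_of_degree_eq_some h
  have hcoeff : p.coeff (N - 1) = 1 := by
    have h1 : ¬ (N = N - 1) := by omega
    have h2 : ¬ (N - 1 = N) := by omega
    have h3 : ¬ (N - 1 = 0) := by omega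
    simp [hp, coeff_X_pow, coeff_C, h1, h2, h3]
  -- Splitting field setup
  set L := p.SplittingField with hL
  haveI : CharZero L := charZero_of_injective_algebraMap (algebraMap ℂ⟮a⟯ L).injective
  set pm : L[X] := p.map (algebraMap ℂ⟮a⟯ L) with hpm
  have hsplits : Splits pm :=
    SplittingField.splits p
  have hpm_monic : pm.Monic := hmonic.map _
  have hpmdeg : pm.natDegree = N := by rw [hpm, natDegree_map, hdegp]
  have hroots_card : Multiset.card pm.roots = N := by
    rw [← hpmdeg]; exact splits_iff_card_roots.mp hsplits
  set R : Finset L := pm.roots.toFinset with hR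
  have hmemR : ∀ x : L, x ∈ R ↔ aeval x p = 0 := by
    intro x
    rw [hR, Multiset.mem_toFinset, mem_roots hpm_monic.ne_zero, IsRoot, hpm, eval_map,
      ← aeval_def]
  have hRroot : ∀ x : L, x ∈ R ↔ x ∈ p.rootSet L := by
    intro x
    rw [hmemR, mem_rootSet]
    exact ⟨fun h => ⟨hmonic.ne_zero, h⟩, fun h => h.2⟩
  have hmaps : ∀ (σ : p.Gal) {x : L}, x ∈ R → σ x ∈ R := by
    intro σ x hx
    rw [hmemR] at hx ⊢
    rw [aeval_algHom_apply, hx, map_zero]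
  -- the permutation representation
  set f : p.Gal → Equiv.Perm {x : L // x ∈ R} := fun σ =>
    { toFun := fun x => ⟨σ x, hmaps σ x.2⟩
      invFun := fun x => ⟨σ.symm x, hmaps σ.symm x.2⟩
      left_inv := fun x => Subtype.ext (σ.symm_apply_apply x)
      right_inv := fun x => Subtype.ext (σ.apply_symm_apply x) } with hf
  have hfinj : Function.Injective f := by
    intro σ τ h
    have hσ : ∀ x ∈ p.rootSet L, σ x = τ x := by
      intro x hx
      have hx' : x ∈ R := (hRroot x).mpr hx
      have := congrArg (fun e : Equiv.Perm {x : L // x ∈ R} => (e ⟨x, hx'⟩ : L)) h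
      simpa [hf] using this
    have halg : AlgEquiv.toAlgHom (σ : L ≃ₐ[ℂ⟮a⟯] L) = AlgEquiv.toAlgHom (τ : L ≃ₐ[ℂ⟮a⟯] L) :=
      AlgHom.ext_of_adjoin_eq_top (Polynomial.SplittingField.adjoin_rootSet p)
        (fun x hx => hσ x hx)
    exact AlgEquiv.ext fun x => AlgHom.congr_fun halg x
  have hcardGal : Nat.card p.Gal = Nat.factorial N := by
    rw [Nat.card_congr hGal.some.toEquiv, Nat.card_eq_fintype_card, Fintype.card_perm,
      Fintype.card_fin]
  have hRcard_le : R.card ≤ N := le_trans (Multiset.toFinset_card_le _) (le_of_eq hroots_card)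
  have hcardPerm : Nat.card (Equiv.Perm {x : L // x ∈ R}) = Nat.factorial R.card := by
    rw [Nat.card_eq_fintype_card, Fintype.card_perm, Fintype.card_coe]
  haveI : Finite p.Gal := Finite.of_injective f hfinj
  have hle : Nat.factorial N ≤ Nat.factorial R.card := by
    rw [← hcardGal, ← hcardPerm]
    exact Nat.card_le_card_of_injective f hfinj
  have hRcard : R.card = N := by
    by_contra hne
    have h1 : R.card ≤ N - 1 := by omega
    have h2 : Nat.factorial R.card ≤ Nat.factorial (N - 1) := Nat.factorial_le h1
    have h3 : Nat.factorial (N - 1) < Nat.factorial N := by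
      have hNs : N = (N - 1) + 1 := by omega
      calc Nat.factorial (N - 1) = 1 * Nat.factorial (N - 1) := (one_mul _).symm
        _ < ((N - 1) + 1) * Nat.factorial (N - 1) :=
            (Nat.mul_lt_mul_right (Nat.factorial_pos _)).mpr (by omega)
        _ = Nat.factorial N := by rw [← Nat.factorial_succ, ← hNs]
    omega
  have hfbij : Function.Bijective f :=
    (Nat.bijective_iff_injective_and_card f).mpr
      ⟨hfinj, by rw [hcardGal, hcardPerm, hRcard]⟩
  -- transpositions realized
  have hswap : ∀ s t : L, (hs : s ∈ R) → (ht : t ∈ R) → s ≠ t →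
      ∃ σ : p.Gal, σ s = t ∧ σ t = s ∧ ∀ x ∈ R, x ≠ s → x ≠ t → σ x = x := by
    intro s t hs ht hst
    obtain ⟨σ, hσ⟩ := hfbij.2 (Equiv.swap ⟨s, hs⟩ ⟨t, ht⟩)
    refine ⟨σ, ?_, ?_, ?_⟩
    · have := congrArg (fun e : Equiv.Perm {x : L // x ∈ R} => (e ⟨s, hs⟩ : L)) hσ
      simpa [hf, Equiv.swap_apply_left] using this
    · have := congrArg (fun e : Equiv.Perm {x : L // x ∈ R} => (e ⟨t, ht⟩ : L)) hσ
      simpa [hf, Equiv.swap_apply_right] using this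
    · intro x hx hxs hxt
      have h1 := congrArg (fun e : Equiv.Perm {x : L // x ∈ R} => (e ⟨x, hx⟩ : L)) hσ
      have h2 : Equiv.swap (⟨s, hs⟩ : {x : L // x ∈ R}) ⟨t, ht⟩ ⟨x, hx⟩ = ⟨x, hx⟩ :=
        Equiv.swap_apply_of_ne_of_ne (by simp [Subtype.ext_iff, hxs])
          (by simp [Subtype.ext_iff, hxt])
      simpa [hf, h2] using h1
  -- sum of all roots is -1
  have hdedup : pm.roots.dedup = pm.roots :=
    Multiset.eq_of_le_of_card_le (Multiset.dedup_le _)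
      (by rw [hroots_card, ← hRcard]; exact le_refl _)
  have hsumR : ∑ x ∈ R, x = -1 := by
    have hnext : pm.nextCoeff = -pm.roots.sum :=
      hsplits.nextCoeff_eq_neg_sum_roots_of_monic hpm_monic
    have hnext1 : pm.nextCoeff = 1 := by
      rw [nextCoeff_of_natDegree_pos (by omega), hpmdeg, hpm, coeff_map, hcoeff, map_one]
    have hroots_sum : pm.roots.sum = -1 := by
      rw [hnext1] at hnext
      linear_combination hnext
    have hval : (R.val : Multiset L) = pm.roots := by
      rw [hR]; exact (Multiset.toFinset_val _).trans hdedup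
    calc ∑ x ∈ R, x = (R.val.map id).sum := rfl
      _ = pm.roots.sum := by rw [Multiset.map_id, hval]
      _ = -1 := hroots_sum
  -- subset sums are injective within R
  have hzero : ∀ A : Finset L, A ⊆ R → A.Nonempty → ∑ x ∈ A, x = 0 → False := by
    intro A hAR ⟨s, hsA⟩ hA0
    by_cases hAeq : A = R
    · rw [hAeq, hsumR] at hA0
      exact one_ne_zero (neg_eq_zero.mp hA0)
    · obtain ⟨t, htR, htA⟩ : ∃ t ∈ R, t ∉ A := by
        by_contra h
        push_neg at h
        exact hAeq (Finset.Subset.antisymm hAR h)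
      have hst : s ≠ t := fun h => htA (h ▸ hsA)
      obtain ⟨σ, h1, h2, h3⟩ := hswap s t (hAR hsA) htR hst
      have heq : ∑ x ∈ A, σ x = 0 := by
        rw [← map_sum σ _ A, hA0, map_zero]
      rw [← Finset.add_sum_erase A (fun x => σ x) hsA, h1] at heq
      have herase : ∑ x ∈ A.erase s, σ x = ∑ x ∈ A.erase s, x := by
        apply Finset.sum_congr rfl
        intro x hx
        have hxA := Finset.mem_of_mem_erase hx
        exact h3 x (hAR hxA) (Finset.ne_of_mem_erase hx) (fun h => htA (h ▸ hxA))
      rw [herase, Finset.sum_erase_eq_sub hsA, hA0] at heq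
      exact hst (show s = t by linear_combination -heq)
  have key0 : ∀ S T : Finset L, S ⊆ R → T ⊆ R → ∑ x ∈ S, x = ∑ x ∈ T, x → S = T := by
    intro S T hS hT hsumST
    by_contra hne
    set A := S \ T with hA
    set B := T \ S with hB
    have hAB : Disjoint A B := disjoint_sdiff_sdiff
    have hsumAB : ∑ x ∈ A, x = ∑ x ∈ B, x := by
      rw [hA, hB, ← Finset.sdiff_inter_self_left S T, ← Finset.sdiff_inter_self_left T S,
        Finset.sum_sdiff_eq_sub Finset.inter_subset_left,
        Finset.sum_sdiff_eq_sub Finset.inter_subset_left, hsumST, Finset.inter_comm]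
    have hAR : A ⊆ R := (Finset.sdiff_subset).trans hS
    have hBR : B ⊆ R := (Finset.sdiff_subset).trans hT
    rcases Finset.eq_empty_or_nonempty A with hAe | hAne
    · rcases Finset.eq_empty_or_nonempty B with hBe | hBne
      · exact hne (Finset.Subset.antisymm
          (by rw [← Finset.sdiff_eq_empty_iff_subset]; exact hAe)
          (by rw [← Finset.sdiff_eq_empty_iff_subset]; exact hBe))
      · exact hzero B hBR hBne (by rw [← hsumAB, hAe, Finset.sum_empty])
    · rcases Finset.eq_empty_or_nonempty B with hBe | hBne
      · exact hzero A hAR hAne (by rw [hsumAB, hBe, Finset.sum_empty])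
      · obtain ⟨s, hsA⟩ := hAne
        obtain ⟨t, htB⟩ := hBne
        have hst : s ≠ t := fun h => (Finset.disjoint_left.mp hAB hsA) (h ▸ htB)
        obtain ⟨σ, h1, h2, h3⟩ := hswap s t (hAR hsA) (hBR htB) hst
        have heq : ∑ x ∈ A, σ x = ∑ x ∈ B, σ x := by
          rw [← map_sum σ _ A, ← map_sum σ _ B, hsumAB]
        have heqA : ∑ x ∈ A, σ x = t + (∑ x ∈ A, x - s) := by
          rw [← Finset.add_sum_erase A (fun x => σ x) hsA, h1, ← Finset.sum_erase_eq_sub hsA]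
          congr 1
          apply Finset.sum_congr rfl
          intro x hx
          exact h3 x (hAR (Finset.mem_of_mem_erase hx)) (Finset.ne_of_mem_erase hx)
            (fun h => (Finset.disjoint_left.mp hAB (Finset.mem_of_mem_erase hx)) (h ▸ htB))
        have heqB : ∑ x ∈ B, σ x = s + (∑ x ∈ B, x - t) := by
          rw [← Finset.add_sum_erase B (fun x => σ x) htB, h2, ← Finset.sum_erase_eq_sub htB]
          congr 1
          apply Finset.sum_congr rfl
          intro x hx
          exact h3 x (hBR (Finset.mem_of_mem_erase hx))
            (fun h => Finset.disjoint_left.mp hAB hsA (by rw [← h]; exact Finset.mem_of_mem_erase hx))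
            (Finset.ne_of_mem_erase hx)
        have h2ts : (2 : L) * t = 2 * s := by
          rw [heqA, heqB] at heq
          linear_combination heq - hsumAB
        exact hst (mul_left_cancel₀ (two_ne_zero (α := L)) h2ts.symm)
  -- embed the splitting field into M
  haveI : Algebra.IsAlgebraic (↥ℂ⟮a⟯) L := Algebra.IsAlgebraic.of_finite (↥ℂ⟮a⟯) L
  set j : L →ₐ[ℂ⟮a⟯] M := IsAlgClosed.lift with hj
  have hjinj : Function.Injective j := j.toRingHom.injective
  set Timg : Finset M := R.image j with hT
  have haev : ∀ z : M, (aeval z) p = z ^ N + z ^ (N - 1) + a := by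
    intro z
    rw [hp]
    simp [AdjoinSimple.algebraMap_gen]
  have hΘroot : ∀ z : M, z ∈ Θ ↔ aeval z p = 0 := by
    intro z
    rw [hΘ, Set.mem_setOf_eq, haev]
  set q : M[X] := p.map (algebraMap ℂ⟮a⟯ M) with hq
  have hqne : q ≠ 0 := (hmonic.map _).ne_zero
  have hqroots_le : q.roots.toFinset.card ≤ N :=
    le_trans (Multiset.toFinset_card_le _)
      (le_trans (card_roots' q) (by rw [hq, natDegree_map, hdegp]))
  have hTsub : Timg ⊆ q.roots.toFinset := by
    intro z hz
    obtain ⟨x, hx, rfl⟩ := Finset.mem_image.mp hz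
    rw [Multiset.mem_toFinset, mem_roots hqne, IsRoot, hq, eval_map, ← aeval_def,
      aeval_algHom_apply, (hmemR x).mp hx, map_zero]
  have hTcard : Timg.card = N := by
    rw [hT, Finset.card_image_of_injective _ hjinj, hRcard]
  have hTeq : Timg = q.roots.toFinset :=
    Finset.eq_of_subset_of_card_le hTsub (by rw [hTcard]; exact hqroots_le)
  have hΘT : Θ = ↑Timg := by
    ext z
    rw [hΘroot, hTeq, Finset.mem_coe, Multiset.mem_toFinset, mem_roots hqne, IsRoot, hq,
      eval_map, ← aeval_def]
  -- subset-sum injectivity in M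
  have key : ∀ S T : Finset M, ↑S ⊆ Θ → ↑T ⊆ Θ → ∑ x ∈ S, x = ∑ x ∈ T, x → S = T := by
    intro S T hS hT hsumST
    set S0 : Finset L := R.filter (fun x => j x ∈ S) with hS0
    set T0 : Finset L := R.filter (fun x => j x ∈ T) with hT0
    have himg : ∀ (U : Finset M) (hU : ↑U ⊆ Θ),
        (R.filter (fun x => j x ∈ U)).image j = U := by
      intro U hU
      apply Finset.Subset.antisymm
      · intro z hz
        obtain ⟨x, hx, rfl⟩ := Finset.mem_image.mp hz
        exact (Finset.mem_filter.mp hx).2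
      · intro z hz
        have hzT : z ∈ Timg := by
          rw [← Finset.mem_coe, ← hΘT]
          exact hU hz
        obtain ⟨x, hx, rfl⟩ := Finset.mem_image.mp hzT
        exact Finset.mem_image.mpr ⟨x, Finset.mem_filter.mpr ⟨hx, hz⟩, rfl⟩
    have hsum0 : ∑ x ∈ S0, x = ∑ x ∈ T0, x := by
      apply hjinj
      calc j (∑ x ∈ S0, x) = ∑ x ∈ S0, j x := map_sum j _ S0
        _ = ∑ z ∈ S0.image j, z := by rw [Finset.sum_image (fun x _ y _ h => hjinj h)]
        _ = ∑ z ∈ S, z := by rw [hS0, himg S hS]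
        _ = ∑ z ∈ T, z := hsumST
        _ = ∑ z ∈ T0.image j, z := by rw [hT0, himg T hT]
        _ = ∑ x ∈ T0, j x := by rw [Finset.sum_image (fun x _ y _ h => hjinj h)]
        _ = j (∑ x ∈ T0, x) := (map_sum j _ T0).symm
    have h00 := key0 S0 T0 (Finset.filter_subset _ _) (Finset.filter_subset _ _) hsum0
    rw [← himg S hS, ← himg T hT, ← hS0, ← hT0, h00]
  -- images of the filtered families coincide
  have himages : ∀ i : Fin n,
      (Finset.univ.filter (fun α : Finset (Fin n) => Odd α.card ∧ i ∈ α)).image φ =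
      (Finset.univ.filter (fun β : Finset (Fin n) => Even β.card ∧ i ∈ β)).image ψ := by
    intro i
    apply key
    · intro z hz
      rw [Finset.coe_image] at hz
      obtain ⟨α, hα, rfl⟩ := hz
      exact hφ.mapsTo (Finset.mem_filter.mp hα).2.1
    · intro z hz
      rw [Finset.coe_image] at hz
      obtain ⟨β, hβ, rfl⟩ := hz
      exact hψ.mapsTo (Finset.mem_filter.mp hβ).2.1
    · rw [Finset.sum_image (fun α hα β hβ h =>
        hφ.injOn (Finset.mem_filter.mp hα).2.1 (Finset.mem_filter.mp hβ).2.1 h),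
        Finset.sum_image (fun α hα β hβ h =>
        hψ.injOn (Finset.mem_filter.mp hα).2.1 (Finset.mem_filter.mp hβ).2.1 h)]
      exact hsum i
  -- derive the contradiction
  have hi0 : (0 : ℕ) < n := by omega
  set i0 : Fin n := ⟨0, hi0⟩
  set α0 : Finset (Fin n) := {i0} with hα0
  have hodd : Odd α0.card := by simp [hα0]
  have hθα : φ α0 ∈ Θ := hφ.mapsTo hodd
  obtain ⟨β0, hβ0even, hβ0⟩ := hψ.surjOn hθα
  have hβ0even' : Even β0.card := hβ0even
  have hmem : ∀ i : Fin n, i ∈ α0 ↔ i ∈ β0 := by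
    intro i
    constructor
    · intro hi
      have h1 : φ α0 ∈ (Finset.univ.filter
          (fun α : Finset (Fin n) => Odd α.card ∧ i ∈ α)).image φ :=
        Finset.mem_image.mpr ⟨α0, Finset.mem_filter.mpr ⟨Finset.mem_univ _, hodd, hi⟩, rfl⟩
      rw [himages i] at h1
      obtain ⟨β, hβ, hβeq⟩ := Finset.mem_image.mp h1
      obtain ⟨-, hβeven, hβi⟩ := Finset.mem_filter.mp hβ
      have hββ0 : β = β0 := hψ.injOn hβeven hβ0even (hβeq.trans hβ0.symm)
      rwa [← hββ0]
    · intro hi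
      have h1 : ψ β0 ∈ (Finset.univ.filter
          (fun β : Finset (Fin n) => Even β.card ∧ i ∈ β)).image ψ :=
        Finset.mem_image.mpr ⟨β0, Finset.mem_filter.mpr ⟨Finset.mem_univ _, hβ0even', hi⟩, rfl⟩
      rw [← himages i] at h1
      obtain ⟨α, hα, hαeq⟩ := Finset.mem_image.mp h1
      obtain ⟨-, hαodd, hαi⟩ := Finset.mem_filter.mp hα
      have hαα0 : α = α0 := hφ.injOn hαodd hodd (hαeq.trans hβ0)
      rwa [← hαα0]
  have hαβ : α0 = β0 := Finset.ext hmem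
  rw [← hαβ] at hβ0even'
  rw [hα0] at hβ0even' hodd
  simp at hβ0even'
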